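/- Let F₂ be the free group on two generators a and b, acting on {0,1,2}^{F₂} by the left shift (sx)_t = x_{s^{-1}t}. Let X be the closed shift-invariant subset of {0,1,2}^{F₂} consisting of all x such that for every g ∈ F₂ the pair (x_g, x_{ga}) lies in {(0,1),(1,0),(1,2),(2,1)} and the pair (x_g, x_{gb}) lies in {(0,1),(1,2),(2,0)}. Then there exists no F₂-invariant Borel probability measure on X. -/

import Mathlib

open MeasureTheory

noncomputable section

namespace Sofic

/-- The first generator `a` of the free group `F₂`. -/
def a : FreeGroup (Fin 2) := FreeGroup.of 0

/-- The second generator `b` of the free group `F₂`. -/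
def b : FreeGroup (Fin 2) := FreeGroup.of 1

/-- The allowed transitions in the direction of the generator `a`:
`0 ⇄ 1 ⇄ 2`. -/
def A1 : Set (Fin 3 × Fin 3) := {(0, 1), (1, 0), (1, 2), (2, 1)}

/-- The allowed transitions in the direction of the generator `b`:
`0 → 1 → 2 → 0`. -/
def A2 : Set (Fin 3 × Fin 3) := {(0, 1), (1, 2), (2, 0)}

/-- Membership in the topological Markov chain `X ⊆ {0,1,2}^{F₂}`: for every `g ∈ F₂`
the pair `(x_g, x_{ga})` lies in `A1` and the pair `(x_g, x_{gb})` lies in `A2`. -/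
def MarkovP (x : FreeGroup (Fin 2) → Fin 3) : Prop :=
  ∀ g : FreeGroup (Fin 2), (x g, x (g * a)) ∈ A1 ∧ (x g, x (g * b)) ∈ A2

/-- The left shift action: `(sx)_t = x_{s⁻¹t}`. -/
def shiftL (s : FreeGroup (Fin 2)) (x : FreeGroup (Fin 2) → Fin 3) :
    FreeGroup (Fin 2) → Fin 3 := fun t => x (s⁻¹ * t)

lemma MarkovP_shift (s : FreeGroup (Fin 2)) {x : FreeGroup (Fin 2) → Fin 3}
    (hx : MarkovP x) : MarkovP (shiftL s x) := by
  intro g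
  have h := hx (s⁻¹ * g)
  constructor
  · simpa [shiftL, mul_assoc] using h.1
  · simpa [shiftL, mul_assoc] using h.2

/-- The left shift action of `F₂` on the Markov chain `X`. -/
def shiftX (s : FreeGroup (Fin 2)) (x : {x : FreeGroup (Fin 2) → Fin 3 // MarkovP x}) :
    {x : FreeGroup (Fin 2) → Fin 3 // MarkovP x} :=
  ⟨shiftL s x.1, MarkovP_shift s x.2⟩

/-- The cyclic permutation `0 → 1 → 2 → 0` of `Fin 3`. -/
def cyc : Fin 3 → Fin 3 := ![1, 2, 0]

lemma hA2' : ∀ p q i : Fin 3, (p, q) ∈ A2 → (p = i ↔ q = cyc i) := by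
  intro p q i
  simp only [A2, Set.mem_insert_iff, Set.mem_singleton_iff]
  revert p q i
  decide

lemma hA1' : ∀ p q : Fin 3, (p, q) ∈ A1 → (p = 1 ↔ (q = 0 ∨ q = 2)) := by
  intro p q
  simp only [A1, Set.mem_insert_iff, Set.mem_singleton_iff]
  revert p q
  decide

lemma measurable_shiftX (s : FreeGroup (Fin 2)) : Measurable (shiftX s) := by
  apply Measurable.subtype_mk
  apply measurable_pi_lambda
  intro t
  exact (measurable_pi_apply _).comp measurable_subtype_coe

/-- There is no `F₂`-invariant Borel probability measure on the topological Markov chain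
`X ⊆ {0,1,2}^{F₂}` whose allowed transitions in the directions of the two generators are
`0 ⇄ 1 ⇄ 2` and `0 → 1 → 2 → 0`. -/

theorem stmt19 :
    ¬ ∃ μ : Measure {x : FreeGroup (Fin 2) → Fin 3 // MarkovP x},
        IsProbabilityMeasure μ ∧ ∀ s : FreeGroup (Fin 2), μ.map (shiftX s) = μ := by
  rintro ⟨μ, hprob, hinv⟩
  set X := {x : FreeGroup (Fin 2) → Fin 3 // MarkovP x}
  set E : Fin 3 → Set X := fun i => {x | x.1 1 = i} with hEdef
  have hmeval : Measurable (fun x : X => x.1 1) :=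
    (measurable_pi_apply 1).comp measurable_subtype_coe
  have hE : ∀ i, MeasurableSet (E i) := fun i => hmeval (measurableSet_singleton i)
  have hpre : ∀ s : FreeGroup (Fin 2), ∀ i,
      shiftX s ⁻¹' (E i) = {x : X | x.1 s⁻¹ = i} := by
    intro s i
    ext x
    simp [shiftX, shiftL, hEdef]
    show x.1 (s⁻¹ * 1) = i ↔ x.1 s⁻¹ = i
    rw [mul_one]
  have hmap : ∀ s : FreeGroup (Fin 2), ∀ i, μ (E i) = μ {x : X | x.1 s⁻¹ = i} := by
    intro s i
    conv_lhs => rw [← hinv s]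
    rw [Measure.map_apply (measurable_shiftX s) (hE i), hpre]
  -- the generator b cyclically permutes the fibers
  have hb : ∀ i, μ (E i) = μ (E (cyc i)) := by
    intro i
    rw [hmap b i]
    congr 1
    ext x
    have h2 := (x.2 b⁻¹).2
    rw [inv_mul_cancel] at h2
    exact hA2' _ _ i h2
  -- the generator a shows μ (E 1) = μ (E 0 ∪ E 2)
  have ha : μ (E 1) = μ (E 0 ∪ E 2) := by
    rw [hmap a 1]
    congr 1
    ext x
    have h1 := (x.2 a⁻¹).1
    rw [inv_mul_cancel] at h1
    have := hA1' _ _ h1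
    exact this
  have hdisj : Disjoint (E 0) (E 2) := by
    rw [Set.disjoint_left]
    intro x h0 h2
    simp only [hEdef, Set.mem_setOf_eq] at h0 h2
    rw [h0] at h2
    exact absurd h2 (by decide)
  have hadd : μ (E 0 ∪ E 2) = μ (E 0) + μ (E 2) := measure_union hdisj (hE 2)
  have h01 : μ (E 0) = μ (E 1) := by simpa [cyc] using hb 0
  have h12 : μ (E 1) = μ (E 2) := by simpa [cyc] using hb 1
  have key : μ (E 1) = μ (E 1) + μ (E 1) := by
    conv_lhs => rw [ha, hadd, h01]
    rw [← h12]
  have hzero : μ (E 1) = 0 := by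
    have hne : μ (E 1) ≠ ⊤ := measure_ne_top μ _
    have : μ (E 1) + 0 = μ (E 1) + μ (E 1) := by simpa using key
    exact ((ENNReal.add_right_inj hne).mp this).symm
  have hcover : (Set.univ : Set X) ⊆ E 0 ∪ E 1 ∪ E 2 := by
    intro x _
    simp only [hEdef, Set.mem_union, Set.mem_setOf_eq]
    have h3 : ∀ j : Fin 3, j = 0 ∨ j = 1 ∨ j = 2 := by decide
    rcases h3 (x.1 1) with h | h | h <;> tauto
  have hle : (1 : ENNReal) ≤ μ (E 0 ∪ E 1 ∪ E 2) := by
    rw [← hprob.measure_univ]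
    exact measure_mono hcover
  have : μ (E 0 ∪ E 1 ∪ E 2) = 0 := by
    have := measure_union_le (μ := μ) (E 0 ∪ E 1) (E 2)
    have h2 := measure_union_le (μ := μ) (E 0) (E 1)
    have : μ (E 0 ∪ E 1 ∪ E 2) ≤ μ (E 0) + μ (E 1) + μ (E 2) :=
      le_trans this (add_le_add h2 le_rfl)
    rw [h01, ← h12, hzero] at this
    simpa using this
  rw [this] at hle
  exact absurd hle (by simp)


end Sofic
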